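/- Fix intermediate dominoes (x_1, y_1), …, (x_n, y_n) and end domino (x_{n+1}, y_{n+1}) over {a, b}, and let R1 be the string rewriting system constructed from them as in the context. Then for every start domino (x_0, y_0) of nonempty strings over {a, b}, the GPCP instance ⟨(x_0, y_0), {(x_i, y_i)}_{i=1}^n, (x_{n+1}, y_{n+1})⟩ has a solution if and only if there exist strings w1, w2 over Σ̂ such that x_0·¢1·w1 →!_{R1} #1·w2 and y_0·¢2·w1 →!_{R1} #2·w2. -/

import Mathlib

/- Strings over an alphabet `σ` are modelled as `List σ`; a finite string
rewriting system is a finite list of rules `(l, r)`. -/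

namespace SRS

variable {σ : Type*}

/-- One-step rewrite relation: `u →_R v`. -/
def Step (R : List (List σ × List σ)) (u v : List σ) : Prop :=
  ∃ x y l r, (l, r) ∈ R ∧ u = x ++ l ++ y ∧ v = x ++ r ++ y

/-- `u →*_R v`: reflexive-transitive closure. -/
def Reduces (R : List (List σ × List σ)) : List σ → List σ → Prop :=
  Relation.ReflTransGen (Step R)

/-- `u ↔*_R v`: reflexive-symmetric-transitive closure. -/
def Equiv (R : List (List σ × List σ)) : List σ → List σ → Prop :=
  Relation.EqvGen (Step R)

/-- `u ↓_R v`: joinability, i.e. a common reduct exists. -/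
def Joins (R : List (List σ × List σ)) : List σ → List σ → Prop :=
  Relation.Join (Reduces R)

/-- A string is irreducible if no rule applies to it. -/
def Irreducible (R : List (List σ × List σ)) (u : List σ) : Prop :=
  ∀ v, ¬ Step R u v

/-- `u →!_R v`: `v` is an `R`-normal form of `u`. -/
def NormalizesTo (R : List (List σ × List σ)) (u v : List σ) : Prop :=
  Reduces R u v ∧ Irreducible R v

/-- Terminating: no infinite chain of rewrite steps. -/
def Terminating (R : List (List σ × List σ)) : Prop :=
  ¬ ∃ f : ℕ → List σ, ∀ n, Step R (f n) (f (n + 1))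

def Confluent (R : List (List σ × List σ)) : Prop :=
  ∀ t s₁ s₂, Reduces R t s₁ → Reduces R t s₂ →
    ∃ t', Reduces R s₁ t' ∧ Reduces R s₂ t'

def Convergent (R : List (List σ × List σ)) : Prop :=
  Terminating R ∧ Confluent R

/-- Dwindling: every right-hand side is a proper prefix of its left-hand side. -/
def Dwindling (R : List (List σ × List σ)) : Prop :=
  ∀ p ∈ R, p.2 <+: p.1 ∧ p.2 ≠ p.1

/-- Monadic: length-reducing with right-hand sides of length at most 1. -/
def Monadic (R : List (List σ × List σ)) : Prop :=
  ∀ p ∈ R, p.2.length < p.1.length ∧ p.2.length ≤ 1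

/-- `MP α`: normal forms of `p ++ s` with `p` a prefix of `α` and `s` a single
symbol or the empty string. -/
def MP (R : List (List σ × List σ)) (α : List σ) : Set (List σ) :=
  { γ | ∃ p s, p <+: α ∧ s.length ≤ 1 ∧ NormalizesTo R (p ++ s) γ }

end SRS

/-! ### The alphabet `Σ̂` and rewriting system `R₁`

Letters of `{a, b}` are modelled by `Bool` (`true ↦ a`, `false ↦ b`).  The
intermediate dominoes `(x₁, y₁), …, (x_n, y_n)` and the end domino
`(x_{n+1}, y_{n+1})` are given by `x y : Fin (n + 1) → List Bool`, where index
`j : Fin (n + 1)` stands for the domino with index `j + 1`; thus `j` with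
`(j : ℕ) < n` are the intermediate dominoes and `j = Fin.last n` is the end
domino.  Correspondingly `Alph.c j` denotes the symbol `c_{j+1}`. -/

/-- The alphabet `Σ̂ = {a, b} ∪ {c₁, …, c_{n+1}} ∪ {¢₁, ¢₂, $, #₁, #₂}`. -/
inductive Alph (n : ℕ) : Type
  | a | b
  | c (j : Fin (n + 1))
  | cent1 | cent2 | dollar | hash1 | hash2

/-- Embedding of strings over `{a, b}` into strings over `Σ̂`. -/
def emb {n : ℕ} (w : List Bool) : List (Alph n) :=
  w.map fun s => if s then Alph.a else Alph.b

/-- The string rewriting system `R₁`: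
`¢₁·cᵢ → xᵢ·¢₁`, `¢₂·cᵢ → yᵢ·¢₂` for `1 ≤ i ≤ n`;
`¢₁·c_{n+1} → #₁·x_{n+1}·$`, `¢₂·c_{n+1} → #₂·y_{n+1}·$`;
`s·#₁ → #₁·s`, `s·#₂ → #₂·s` for `s ∈ {a, b}`. -/
def R1 (n : ℕ) (x y : Fin (n + 1) → List Bool) :
    List (List (Alph n) × List (Alph n)) :=
  ((List.finRange (n + 1)).flatMap fun (j : Fin (n + 1)) =>
    if (j : ℕ) < n then
      [ ([Alph.cent1, Alph.c j], emb (x j) ++ [Alph.cent1]),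
        ([Alph.cent2, Alph.c j], emb (y j) ++ [Alph.cent2]) ]
    else
      [ ([Alph.cent1, Alph.c j], [Alph.hash1] ++ emb (x j) ++ [Alph.dollar]),
        ([Alph.cent2, Alph.c j], [Alph.hash2] ++ emb (y j) ++ [Alph.dollar]) ])
  ++ ([true, false].flatMap fun s =>
      [ ([(if s then Alph.a else Alph.b), Alph.hash1],
         [Alph.hash1, (if s then Alph.a else Alph.b)]),
        ([(if s then Alph.a else Alph.b), Alph.hash2],
         [Alph.hash2, (if s then Alph.a else Alph.b)]) ])

/-- The GPCP instance with start domino `(x₀, y₀)`, intermediate dominoes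
`(x_j, y_j)` (`1 ≤ j ≤ n`) and end domino `(x_{n+1}, y_{n+1})` has a solution. -/
def GPCPSol (n : ℕ) (x₀ y₀ : List Bool) (x y : Fin (n + 1) → List Bool) : Prop :=
  ∃ l : List (Fin (n + 1)), (∀ j ∈ l, (j : ℕ) < n) ∧
    x₀ ++ l.flatMap x ++ x (Fin.last n) = y₀ ++ l.flatMap y ++ y (Fin.last n)


namespace GP
open SRS

variable {n : ℕ}

def E (s : Bool) : Alph n := if s then .a else .b

lemma emb_eq_map (w : List Bool) : (emb w : List (Alph n)) = w.map E := rfl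

lemma emb_append (u v : List Bool) :
    (emb (u ++ v) : List (Alph n)) = emb u ++ emb v := List.map_append

lemma emb_cons (s : Bool) (w : List Bool) :
    (emb (s :: w) : List (Alph n)) = E s :: emb w := rfl

lemma E_inj : Function.Injective (E (n := n)) := by
  intro s t h; cases s <;> cases t <;> simp [E] at h ⊢

lemma emb_inj : Function.Injective (emb (n := n)) := by
  intro u v h
  rw [emb_eq_map, emb_eq_map] at h
  exact List.map_injective_iff.mpr E_inj h

lemma mem_emb {s : Alph n} {q : List Bool} (h : s ∈ (emb q : List (Alph n))) :
    ∃ b, s = E b := by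
  rw [emb_eq_map] at h
  obtain ⟨b, -, rfl⟩ := List.mem_map.mp h
  exact ⟨b, rfl⟩

lemma c_inj : Function.Injective (Alph.c (n := n)) := by
  intro a b h; simpa using h

lemma last_of_not_lt {j : Fin (n+1)} (h : ¬ (j:ℕ) < n) : j = Fin.last n :=
  Fin.ext (le_antisymm (Nat.lt_succ_iff.mp j.isLt) (not_lt.mp h))

lemma mem_R1_iff (x y : Fin (n + 1) → List Bool) (l r : List (Alph n)) :
    (l, r) ∈ R1 n x y ↔
      (∃ j : Fin (n+1), (j:ℕ) < n ∧
        ((l = [.cent1, .c j] ∧ r = emb (x j) ++ [.cent1]) ∨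
         (l = [.cent2, .c j] ∧ r = emb (y j) ++ [.cent2]))) ∨
      (l = [.cent1, .c (Fin.last n)] ∧ r = .hash1 :: (emb (x (Fin.last n)) ++ [.dollar])) ∨
      (l = [.cent2, .c (Fin.last n)] ∧ r = .hash2 :: (emb (y (Fin.last n)) ++ [.dollar])) ∨
      (∃ s : Alph n, (s = .a ∨ s = .b) ∧
        ((l = [s, .hash1] ∧ r = [.hash1, s]) ∨ (l = [s, .hash2] ∧ r = [.hash2, s]))) := by
  simp only [R1, List.mem_append, List.mem_flatMap, List.mem_finRange, true_and]
  constructor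
  · rintro (⟨j, hj⟩ | h)
    · by_cases hlt : (j:ℕ) < n
      · simp only [if_pos hlt, List.mem_cons, List.mem_singleton, List.not_mem_nil, or_false] at hj
        rcases hj with h | h <;>
          exact Or.inl ⟨j, hlt, by simp [Prod.ext_iff] at h; tauto⟩
      · have hj' := last_of_not_lt hlt
        subst hj'
        simp only [if_neg hlt, List.mem_cons, List.mem_singleton, List.not_mem_nil, or_false] at hj
        rcases hj with h | h
        · exact Or.inr (Or.inl (by simp [Prod.ext_iff] at h; tauto))
        · exact Or.inr (Or.inr (Or.inl (by simp [Prod.ext_iff] at h; tauto)))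
    · simp only [List.flatMap_cons, List.flatMap_nil, List.append_nil, List.mem_append,
        List.mem_cons, List.mem_singleton, List.not_mem_nil, or_false] at h
      refine Or.inr (Or.inr (Or.inr ?_))
      obtain ⟨s, -, h⟩ := h
      refine ⟨if s = true then Alph.a else Alph.b, ?_, ?_⟩
      · cases s <;> simp
      · rcases h with h | h <;> simp [Prod.ext_iff] at h <;> tauto
  · rintro (⟨j, hlt, (⟨hl, hr⟩|⟨hl, hr⟩)⟩ | ⟨hl, hr⟩ | ⟨hl, hr⟩ | ⟨s, hs, (⟨hl,hr⟩|⟨hl,hr⟩)⟩)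
    · exact Or.inl ⟨j, by simp [if_pos hlt, hl, hr]⟩
    · exact Or.inl ⟨j, by simp [if_pos hlt, hl, hr]⟩
    · exact Or.inl ⟨Fin.last n, by simp [hl, hr]⟩
    · exact Or.inl ⟨Fin.last n, by simp [hl, hr]⟩
    · refine Or.inr ?_; rcases hs with rfl | rfl <;> simp [hl, hr]
    · refine Or.inr ?_; rcases hs with rfl | rfl <;> simp [hl, hr]

/-- Shape of rules: every lhs is a 2-letter word `[s1, s2]`, `s1` is a cent or a
letter and `s2` is a `c`-symbol or a hash. -/
lemma shape {x y : Fin (n+1) → List Bool} {l r : List (Alph n)}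
    (h : (l, r) ∈ R1 n x y) :
    ∃ s1 s2, l = [s1, s2] ∧
      (s1 = .cent1 ∨ s1 = .cent2 ∨ ∃ b, s1 = E b) ∧
      ((∃ j, s2 = .c j) ∨ s2 = .hash1 ∨ s2 = .hash2) := by
  rcases (mem_R1_iff x y l r).mp h with
      ⟨j, _, (⟨rfl, -⟩|⟨rfl, -⟩)⟩ | ⟨rfl, -⟩ | ⟨rfl, -⟩ | ⟨s, hs, (⟨rfl, -⟩|⟨rfl, -⟩)⟩
  · exact ⟨_, _, rfl, Or.inl rfl, Or.inl ⟨j, rfl⟩⟩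
  · exact ⟨_, _, rfl, Or.inr (Or.inl rfl), Or.inl ⟨j, rfl⟩⟩
  · exact ⟨_, _, rfl, Or.inl rfl, Or.inl ⟨_, rfl⟩⟩
  · exact ⟨_, _, rfl, Or.inr (Or.inl rfl), Or.inl ⟨_, rfl⟩⟩
  · refine ⟨_, _, rfl, Or.inr (Or.inr ?_), Or.inr (Or.inl rfl)⟩
    rcases hs with rfl | rfl
    exacts [⟨true, rfl⟩, ⟨false, rfl⟩]
  · refine ⟨_, _, rfl, Or.inr (Or.inr ?_), Or.inr (Or.inr rfl)⟩
    rcases hs with rfl | rfl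
    exacts [⟨true, rfl⟩, ⟨false, rfl⟩]

/-- The head of every rhs is a letter or a hash; in particular never a `c`. -/
lemma rhs_head {x y : Fin (n+1) → List Bool}
    (hx : ∀ j, x j ≠ []) (hy : ∀ j, y j ≠ [])
    {l r : List (Alph n)} (h : (l, r) ∈ R1 n x y) :
    ∃ s t, r = s :: t ∧ ∀ j : Fin (n+1), s ≠ Alph.c j := by
  rcases (mem_R1_iff x y l r).mp h with
      ⟨j, _, (⟨-, rfl⟩|⟨-, rfl⟩)⟩ | ⟨-, rfl⟩ | ⟨-, rfl⟩ | ⟨s, hs, (⟨-, rfl⟩|⟨-, rfl⟩)⟩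
  · obtain ⟨b, w, hw⟩ := List.exists_cons_of_ne_nil (hx j)
    exact ⟨E b, emb w ++ [.cent1], by simp [hw, emb_cons], by cases b <;> simp [E]⟩
  · obtain ⟨b, w, hw⟩ := List.exists_cons_of_ne_nil (hy j)
    exact ⟨E b, emb w ++ [.cent2], by simp [hw, emb_cons], by cases b <;> simp [E]⟩
  · exact ⟨_, _, rfl, by simp⟩
  · exact ⟨_, _, rfl, by simp⟩
  · exact ⟨_, _, rfl, by rcases hs with rfl | rfl <;> simp⟩
  · exact ⟨_, _, rfl, by rcases hs with rfl | rfl <;> simp⟩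

lemma step_cons_c {x y : Fin (n+1) → List Bool}
    (hx : ∀ j, x j ≠ []) (hy : ∀ j, y j ≠ [])
    {j : Fin (n+1)} {w b : List (Alph n)}
    (h : Step (R1 n x y) w (Alph.c j :: b)) :
    ∃ t, w = Alph.c j :: t ∧ Step (R1 n x y) t b := by
  obtain ⟨a, b', l, r, hmem, hw, hv⟩ := h
  cases a with
  | nil =>
    obtain ⟨s, t, rfl, hs⟩ := rhs_head hx hy hmem
    simp only [List.nil_append, List.cons_append, List.cons.injEq] at hv
    exact absurd hv.1.symm (hs j)
  | cons a0 a' =>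
    simp only [List.cons_append, List.cons.injEq] at hw hv
    exact ⟨a' ++ l ++ b', by simp [hw, ← hv.1],
      ⟨a', b', l, r, hmem, rfl, hv.2⟩⟩

lemma reduces_cons_c {x y : Fin (n+1) → List Bool}
    (hx : ∀ j, x j ≠ []) (hy : ∀ j, y j ≠ [])
    {j : Fin (n+1)} {r0 rest : List (Alph n)}
    (h : Reduces (R1 n x y) r0 (Alph.c j :: rest)) :
    ∃ t, r0 = Alph.c j :: t ∧ Reduces (R1 n x y) t rest := by
  have h' : Relation.ReflTransGen (Step (R1 n x y)) r0 (Alph.c j :: rest) := h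
  clear h
  induction h' using Relation.ReflTransGen.head_induction_on with
  | refl => exact ⟨rest, rfl, Relation.ReflTransGen.refl⟩
  | head hstep _ ih =>
    obtain ⟨t, rfl, hred⟩ := ih
    obtain ⟨t', rfl, hstep'⟩ := step_cons_c hx hy hstep
    exact ⟨t', rfl, Relation.ReflTransGen.head hstep' hred⟩

/-- Splitting at the first occurrence of a distinguished symbol. -/
lemma split_unique {α : Type*} {d : α} :
    ∀ {A C B D : List α}, A ++ d :: B = C ++ d :: D → d ∉ A → d ∉ C →
      A = C ∧ B = D := by
  intro A
  induction A with
  | nil =>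
    intro C B D h hA hC
    cases C with
    | nil => simpa using h
    | cons c0 C' =>
      simp only [List.nil_append, List.cons_append, List.cons.injEq] at h
      exact absurd (h.1 ▸ List.mem_cons_self (a := c0) (l := C')) hC
  | cons a0 A' ih =>
    intro C B D h hA hC
    cases C with
    | nil =>
      simp only [List.cons_append, List.nil_append, List.cons.injEq] at h
      exact absurd (h.1 ▸ List.mem_cons_self (a := a0) (l := A')) hA
    | cons c0 C' =>
      simp only [List.cons_append, List.cons.injEq] at h
      obtain ⟨rfl, h2⟩ := h
      have hA' : d ∉ A' := fun hm => hA (List.mem_cons_of_mem _ hm)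
      have hC' : d ∉ C' := fun hm => hC (List.mem_cons_of_mem _ hm)
      obtain ⟨rfl, rfl⟩ := ih h2 hA' hC'
      exact ⟨rfl, rfl⟩

end GP

namespace GP
open SRS

variable {n : ℕ}

/-- Invariant describing all strings reachable from `emb x₀ ++ [cent] ++ w₁`. -/
def Inv (x y : Fin (n+1) → List Bool) (cent hash : Alph n)
    (f : Fin (n+1) → List Bool) (x₀ : List Bool) (w₁ u : List (Alph n)) : Prop :=
  (∃ (L : List (Fin (n+1))) (r0 rest : List (Alph n)),
      (∀ j ∈ L, (j:ℕ) < n) ∧ w₁ = L.map Alph.c ++ r0 ∧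
      Reduces (R1 n x y) r0 rest ∧
      u = emb (x₀ ++ L.flatMap f) ++ [cent] ++ rest) ∨
  (∃ (L : List (Fin (n+1))) (r0 rest : List (Alph n)) (p q : List Bool),
      (∀ j ∈ L, (j:ℕ) < n) ∧ w₁ = L.map Alph.c ++ Alph.c (Fin.last n) :: r0 ∧
      Reduces (R1 n x y) r0 rest ∧
      p ++ q = x₀ ++ L.flatMap f ++ f (Fin.last n) ∧
      u = emb p ++ [hash] ++ emb q ++ [Alph.dollar] ++ rest)

lemma inv_step {x y : Fin (n+1) → List Bool}
    (hx : ∀ j, x j ≠ []) (hy : ∀ j, y j ≠ [])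
    {cent hash : Alph n} {f : Fin (n+1) → List Bool}
    (hcent : ∀ s2 r, ([cent, s2], r) ∈ R1 n x y →
      ∃ j : Fin (n+1), s2 = .c j ∧
        (((j:ℕ) < n ∧ r = emb (f j) ++ [cent]) ∨
         (j = Fin.last n ∧ r = hash :: (emb (f j) ++ [.dollar]))))
    (hhash : ∀ s1 r, ([s1, hash], r) ∈ R1 n x y →
      ∃ b : Bool, s1 = E b ∧ r = [hash, E b])
    (hcne : cent = .cent1 ∨ cent = .cent2)
    (hhne : hash = .hash1 ∨ hash = .hash2)
    {x₀ : List Bool} {w₁ u v : List (Alph n)}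
    (hstep : Step (R1 n x y) u v) (hinv : Inv x y cent hash f x₀ w₁ u) :
    Inv x y cent hash f x₀ w₁ v := by
  obtain ⟨a, b, l, r, hmem, hu, hv⟩ := hstep
  obtain ⟨s1, s2, rfl, hs1, hs2⟩ := shape hmem
  -- facts about s1, s2
  have hs2c : ∀ b0 : Bool, s2 ≠ E b0 := by
    intro b0 hb0
    rcases hs2 with ⟨j, rfl⟩ | rfl | rfl <;> cases b0 <;> simp [E] at hb0
  have hs2cent : s2 ≠ cent := by
    rcases hs2 with ⟨j, rfl⟩ | rfl | rfl <;> rcases hcne with rfl | rfl <;> simp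
  have hs2dollar : s2 ≠ .dollar := by
    rcases hs2 with ⟨j, rfl⟩ | rfl | rfl <;> simp
  have hs1hash : s1 ≠ hash := by
    intro hcontra
    rcases hs1 with rfl | rfl | ⟨b0, rfl⟩ <;> rcases hhne with rfl | rfl <;>
      first
        | exact absurd hcontra (by simp)
        | (cases b0 <;> simp [E] at hcontra)
  have hs1dollar : s1 ≠ .dollar := by
    intro hcontra
    rcases hs1 with rfl | rfl | ⟨b0, rfl⟩ <;>
      first
        | exact absurd hcontra (by simp)
        | (cases b0 <;> simp [E] at hcontra)
  rcases hinv with ⟨L, r0, rest, hL, hw, hred, hu'⟩ |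
    ⟨L, r0, rest, p, q, hL, hw, hred, hpq, hu'⟩
  · -- Phase A
    set z := x₀ ++ L.flatMap f with hz
    -- the common "good" case: rule fires at the cent boundary
    have good : a = emb z → s1 = cent → rest = s2 :: b →
        Inv x y cent hash f x₀ w₁ v := by
      rintro rfl rfl hrest
      obtain ⟨j, rfl, hcase⟩ := hcent s2 r hmem
      rw [hrest] at hred
      obtain ⟨t0, rfl, hred'⟩ := reduces_cons_c hx hy hred
      rcases hcase with ⟨hj, rfl⟩ | ⟨rfl, rfl⟩
      · left
        refine ⟨L ++ [j], t0, b, ?_, ?_, hred', ?_⟩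
        · intro i hi
          rcases List.mem_append.mp hi with hi | hi
          · exact hL i hi
          · simp at hi; subst hi; exact hj
        · simp [hw]
        · simp [hv, hz, emb_append]
      · right
        refine ⟨L, t0, b, z, f (Fin.last n), hL, by simp [hw], hred', by simp [hz], ?_⟩
        simp [hv, emb_append]
    have heq : a ++ ([s1, s2] ++ b) = emb z ++ ([cent] ++ rest) := by
      simpa using hu.symm.trans hu'
    rcases List.append_eq_append_iff.mp heq with ⟨t, h1, h2⟩ | ⟨t, h1, h2⟩
    · cases t with
      | nil =>
        simp only [List.append_nil] at h1
        simp only [List.nil_append, List.cons_append, List.cons.injEq] at h2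
        exact good h1.symm h2.1 h2.2.symm
      | cons t1 t' =>
        cases t' with
        | nil =>
          exfalso
          simp only [List.cons_append, List.nil_append, List.cons.injEq] at h2
          exact hs2cent h2.2.1
        | cons t2 t'' =>
          exfalso
          simp only [List.cons_append, List.cons.injEq] at h2
          have ht2 : t2 ∈ (emb z : List (Alph n)) := by
            rw [h1]
            exact List.mem_append.mpr (Or.inr (by simp))
          obtain ⟨b0, hb0⟩ := mem_emb ht2
          exact hs2c b0 (h2.2.1.trans hb0)
    · cases t with
      | nil =>
        simp only [List.append_nil] at h1
        simp only [List.nil_append, List.cons_append, List.cons.injEq] at h2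
        exact good h1 h2.1.symm h2.2
      | cons c0 t' =>
        simp only [List.nil_append, List.cons_append, List.cons.injEq] at h2
        obtain ⟨hc0, hrest⟩ := h2
        left
        refine ⟨L, r0, t' ++ r ++ b, hL, hw,
          Relation.ReflTransGen.tail hred
            ⟨t', b, [s1, s2], r, hmem, by simp [hrest], by simp⟩, ?_⟩
        simp [hv, h1, ← hc0, hz]
  · -- Phase B
    have heq : a ++ ([s1, s2] ++ b) =
        emb p ++ ([hash] ++ ((emb q ++ [Alph.dollar]) ++ rest)) := by
      simpa using hu.symm.trans hu'
    rcases List.append_eq_append_iff.mp heq with ⟨t, h1, h2⟩ | ⟨t, h1, h2⟩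
    · cases t with
      | nil =>
        exfalso
        simp only [List.nil_append, List.cons_append, List.cons.injEq] at h2
        exact hs1hash h2.1
      | cons t1 t' =>
        cases t' with
        | nil =>
          -- migration step: s2 = hash
          simp only [List.cons_append, List.nil_append, List.cons.injEq] at h2
          obtain ⟨hs1t, hs2h, hb⟩ := h2
          subst hs2h
          obtain ⟨b0, rfl, rfl⟩ := hhash s1 r hmem
          -- h1 : emb p = a ++ [E b0]
          rcases List.eq_nil_or_concat p with rfl | ⟨p', pl, rfl⟩
          · exfalso; simpa [emb] using h1
          · simp only [List.concat_eq_append] at hpq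
            rw [List.concat_eq_append, emb_append] at h1
            obtain ⟨ha, hE⟩ := List.append_inj' h1 (by simp [emb, E])
            right
            refine ⟨L, r0, rest, p', pl :: q, hL, hw, hred, by simpa using hpq, ?_⟩
            have hEpl : (E pl : Alph n) = t1 := by
              simpa [emb_cons, emb, E] using hE
            rw [← hs1t] at hEpl
            simp [hv, ← ha, hb, emb_cons, ← hEpl]
        | cons t2 t'' =>
          exfalso
          simp only [List.cons_append, List.cons.injEq] at h2
          have ht2 : t2 ∈ (emb p : List (Alph n)) := by
            rw [h1]; exact List.mem_append.mpr (Or.inr (by simp))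
          obtain ⟨b0, hb0⟩ := mem_emb ht2
          exact hs2c b0 (h2.2.1.trans hb0)
    · cases t with
      | nil =>
        exfalso
        simp only [List.append_nil] at h1
        simp only [List.nil_append, List.cons_append, List.cons.injEq] at h2
        exact hs1hash h2.1.symm
      | cons h0 t' =>
        simp only [List.cons_append, List.cons.injEq] at h2
        obtain ⟨hh0, hT⟩ := h2
        simp only [List.nil_append] at hT
        -- hT : (emb q ++ [dollar]) ++ rest = t' ++ ([s1,s2] ++ b)
        rcases List.append_eq_append_iff.mp hT with ⟨a', ht', hrest⟩ | ⟨c', hq, hD⟩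
        · -- redex inside rest
          right
          refine ⟨L, r0, a' ++ r ++ b, p, q, hL, hw,
            Relation.ReflTransGen.tail hred
              ⟨a', b, [s1, s2], r, hmem, by simp [hrest], by simp⟩, hpq, ?_⟩
          simp [hv, h1, ← hh0, ht']
        · cases c' with
          | nil =>
            simp only [List.append_nil] at hq
            simp only [List.nil_append] at hD
            right
            refine ⟨L, r0, r ++ b, p, q, hL, hw,
              Relation.ReflTransGen.tail hred
                ⟨[], b, [s1, s2], r, hmem, by simp [← hD], by simp⟩, hpq, ?_⟩
            simp [hv, h1, ← hh0, ← hq]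
          | cons e0 c'' =>
            exfalso
            simp only [List.cons_append, List.cons.injEq] at hD
            obtain ⟨hs1e, hD2⟩ := hD
            cases c'' with
            | nil =>
              have : (e0 : Alph n) = .dollar := by
                have := List.append_inj' hq (by simp)
                simpa using this.2.symm
              exact hs1dollar (hs1e.trans this)
            | cons e1 c''' =>
              simp only [List.cons_append, List.cons.injEq] at hD2
              have he1 : e1 ∈ (emb q ++ [Alph.dollar] : List (Alph n)) := by
                rw [hq]; exact List.mem_append.mpr (Or.inr (by simp))
              rcases List.mem_append.mp he1 with h | h
              · obtain ⟨b0, hb0⟩ := mem_emb h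
                exact hs2c b0 (hD2.1.trans hb0)
              · simp only [List.mem_singleton] at h
                exact hs2dollar (hD2.1.trans h)

end GP

namespace GP
open SRS

variable {n : ℕ}

lemma hcent1 (x y : Fin (n+1) → List Bool) : ∀ s2 r, ([Alph.cent1, s2], r) ∈ R1 n x y →
    ∃ j : Fin (n+1), s2 = .c j ∧
      (((j:ℕ) < n ∧ r = emb (x j) ++ [.cent1]) ∨
       (j = Fin.last n ∧ r = .hash1 :: (emb (x j) ++ [.dollar]))) := by
  intro s2 r h
  rcases (mem_R1_iff x y _ _).mp h with
      ⟨j, hj, (⟨hl, hr⟩|⟨hl, hr⟩)⟩ | ⟨hl, hr⟩ | ⟨hl, hr⟩ | ⟨s, hs, (⟨hl, hr⟩|⟨hl, hr⟩)⟩ <;>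
    simp only [List.cons.injEq, and_true] at hl
  · exact ⟨j, hl.2, Or.inl ⟨hj, hr⟩⟩
  · simp at hl
  · exact ⟨Fin.last n, hl.2, Or.inr ⟨rfl, hr⟩⟩
  · simp at hl
  · rcases hs with rfl | rfl <;> simp at hl
  · rcases hs with rfl | rfl <;> simp at hl

lemma hcent2 (x y : Fin (n+1) → List Bool) : ∀ s2 r, ([Alph.cent2, s2], r) ∈ R1 n x y →
    ∃ j : Fin (n+1), s2 = .c j ∧
      (((j:ℕ) < n ∧ r = emb (y j) ++ [.cent2]) ∨
       (j = Fin.last n ∧ r = .hash2 :: (emb (y j) ++ [.dollar]))) := by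
  intro s2 r h
  rcases (mem_R1_iff x y _ _).mp h with
      ⟨j, hj, (⟨hl, hr⟩|⟨hl, hr⟩)⟩ | ⟨hl, hr⟩ | ⟨hl, hr⟩ | ⟨s, hs, (⟨hl, hr⟩|⟨hl, hr⟩)⟩ <;>
    simp only [List.cons.injEq, and_true] at hl
  · simp at hl
  · exact ⟨j, hl.2, Or.inl ⟨hj, hr⟩⟩
  · simp at hl
  · exact ⟨Fin.last n, hl.2, Or.inr ⟨rfl, hr⟩⟩
  · rcases hs with rfl | rfl <;> simp at hl
  · rcases hs with rfl | rfl <;> simp at hl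

lemma hhash1 (x y : Fin (n+1) → List Bool) : ∀ s1 r, ([s1, Alph.hash1], r) ∈ R1 n x y →
    ∃ b : Bool, s1 = E b ∧ r = [.hash1, E b] := by
  intro s1 r h
  rcases (mem_R1_iff x y _ _).mp h with
      ⟨j, hj, (⟨hl, hr⟩|⟨hl, hr⟩)⟩ | ⟨hl, hr⟩ | ⟨hl, hr⟩ | ⟨s, hs, (⟨hl, hr⟩|⟨hl, hr⟩)⟩ <;>
    simp only [List.cons.injEq, and_true] at hl
  · simp at hl
  · simp at hl
  · simp at hl
  · simp at hl
  · rcases hs with rfl | rfl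
    · exact ⟨true, hl, by simpa [E] using hr⟩
    · exact ⟨false, hl, by simpa [E] using hr⟩
  · rcases hs with rfl | rfl <;> simp at hl

lemma hhash2 (x y : Fin (n+1) → List Bool) : ∀ s1 r, ([s1, Alph.hash2], r) ∈ R1 n x y →
    ∃ b : Bool, s1 = E b ∧ r = [.hash2, E b] := by
  intro s1 r h
  rcases (mem_R1_iff x y _ _).mp h with
      ⟨j, hj, (⟨hl, hr⟩|⟨hl, hr⟩)⟩ | ⟨hl, hr⟩ | ⟨hl, hr⟩ | ⟨s, hs, (⟨hl, hr⟩|⟨hl, hr⟩)⟩ <;>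
    simp only [List.cons.injEq, and_true] at hl
  · simp at hl
  · simp at hl
  · simp at hl
  · simp at hl
  · rcases hs with rfl | rfl <;> simp at hl
  · rcases hs with rfl | rfl
    · exact ⟨true, hl, by simpa [E] using hr⟩
    · exact ⟨false, hl, by simpa [E] using hr⟩

lemma inv_reduces {x y : Fin (n+1) → List Bool}
    (hx : ∀ j, x j ≠ []) (hy : ∀ j, y j ≠ [])
    {cent hash : Alph n} {f : Fin (n+1) → List Bool}
    (hcent : ∀ s2 r, ([cent, s2], r) ∈ R1 n x y →
      ∃ j : Fin (n+1), s2 = .c j ∧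
        (((j:ℕ) < n ∧ r = emb (f j) ++ [cent]) ∨
         (j = Fin.last n ∧ r = hash :: (emb (f j) ++ [.dollar]))))
    (hhash : ∀ s1 r, ([s1, hash], r) ∈ R1 n x y →
      ∃ b : Bool, s1 = E b ∧ r = [hash, E b])
    (hcne : cent = .cent1 ∨ cent = .cent2)
    (hhne : hash = .hash1 ∨ hash = .hash2)
    {x₀ : List Bool} {w₁ u v : List (Alph n)}
    (hred : Reduces (R1 n x y) u v) (hinv : Inv x y cent hash f x₀ w₁ u) :
    Inv x y cent hash f x₀ w₁ v := by
  have h' : Relation.ReflTransGen (Step (R1 n x y)) u v := hred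
  clear hred
  induction h' with
  | refl => exact hinv
  | tail _ hstep ih => exact inv_step hx hy hcent hhash hcne hhne hstep ih

/-- Multi-step rewriting in phase A. -/
lemma reduces_phaseA {x y : Fin (n+1) → List Bool} {cent : Alph n}
    {f : Fin (n+1) → List Bool}
    (hr : ∀ j : Fin (n+1), (j:ℕ) < n → ([cent, .c j], emb (f j) ++ [cent]) ∈ R1 n x y)
    (L : List (Fin (n+1))) (hL : ∀ j ∈ L, (j:ℕ) < n) (z : List Bool) (v : List (Alph n)) :
    Reduces (R1 n x y) (emb z ++ [cent] ++ (L.map Alph.c ++ v))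
      (emb (z ++ L.flatMap f) ++ [cent] ++ v) := by
  induction L generalizing z with
  | nil =>
    have h : (emb (z ++ ([] : List (Fin (n+1))).flatMap f) ++ [cent] ++ v : List (Alph n)) =
        emb z ++ [cent] ++ (List.map Alph.c [] ++ v) := by simp
    rw [h]
    exact Relation.ReflTransGen.refl
  | cons j L' ih =>
    have hstep : Step (R1 n x y) (emb z ++ [cent] ++ ((j :: L').map Alph.c ++ v))
        (emb (z ++ f j) ++ [cent] ++ (L'.map Alph.c ++ v)) := by
      refine ⟨emb z, L'.map Alph.c ++ v, [cent, .c j], emb (f j) ++ [cent],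
        hr j (hL j (by simp)), by simp, by simp [emb_append]⟩
    have ih' := ih (fun i hi => hL i (by simp [hi])) (z ++ f j)
    have : z ++ f j ++ L'.flatMap f = z ++ (j :: L').flatMap f := by simp
    rw [this] at ih'
    exact Relation.ReflTransGen.head hstep ih'

/-- Multi-step migration of the hash past letters. -/
lemma reduces_hash {x y : Fin (n+1) → List Bool} {hash : Alph n}
    (hr : ∀ s : Bool, ([E s, hash], [hash, E s]) ∈ R1 n x y)
    (p : List Bool) (t : List (Alph n)) :
    Reduces (R1 n x y) (emb p ++ [hash] ++ t) ([hash] ++ emb p ++ t) := by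
  induction p using List.reverseRecOn generalizing t with
  | nil =>
    have h : (emb ([] : List Bool) ++ [hash] ++ t : List (Alph n)) =
        [hash] ++ emb ([] : List Bool) ++ t := by simp [emb]
    rw [h]
    exact Relation.ReflTransGen.refl
  | append_singleton p' s ih =>
    have hstep : Step (R1 n x y) (emb (p' ++ [s]) ++ [hash] ++ t)
        (emb p' ++ [hash] ++ (E s :: t)) := by
      refine ⟨emb p', t, [E s, hash], [hash, E s], hr s, by simp [emb_append, emb_cons, emb, E], by simp⟩
    have ih' := ih (E s :: t)
    have : ([hash] ++ emb p' ++ (E s :: t) : List (Alph n)) = [hash] ++ emb (p' ++ [s]) ++ t := by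
      simp [emb_append, emb_cons, emb, E]
    rw [this] at ih'
    exact Relation.ReflTransGen.head hstep ih'

/-- Normal forms. -/
lemma irred {x y : Fin (n+1) → List Bool} {hash : Alph n}
    (hhne : hash = .hash1 ∨ hash = .hash2) (q : List Bool) :
    Irreducible (R1 n x y) (hash :: (emb q ++ [Alph.dollar])) := by
  rintro v ⟨a, b, l, r, hmem, hu, -⟩
  obtain ⟨s1, s2, rfl, hs1, hs2⟩ := shape hmem
  cases a with
  | nil =>
    simp only [List.nil_append, List.cons_append, List.cons.injEq] at hu
    rcases hs1 with rfl | rfl | ⟨b0, rfl⟩ <;> rcases hhne with rfl | rfl <;>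
      first
        | simp at hu
        | (cases b0 <;> simp [E] at hu)
  | cons a0 a' =>
    simp only [List.cons_append, List.cons.injEq] at hu
    have hs2m : s2 ∈ (emb q ++ [Alph.dollar] : List (Alph n)) := by
      rw [hu.2]
      exact List.mem_append.mpr (Or.inl (by simp))
    rcases List.mem_append.mp hs2m with h | h
    · obtain ⟨b0, hb0⟩ := mem_emb h
      rcases hs2 with ⟨j, rfl⟩ | rfl | rfl <;> cases b0 <;> simp [E] at hb0
    · simp only [List.mem_singleton] at h
      rcases hs2 with ⟨j, rfl⟩ | rfl | rfl <;> simp at h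

end GP

namespace GP
open SRS

variable {n : ℕ}

lemma dollar_not_mem_emb (q : List Bool) :
    Alph.dollar ∉ (emb q : List (Alph n)) := by
  intro h
  obtain ⟨b0, hb0⟩ := mem_emb h
  cases b0 <;> simp [E] at hb0

lemma clast_not_mem {L : List (Fin (n+1))} (hL : ∀ j ∈ L, (j:ℕ) < n) :
    Alph.c (Fin.last n) ∉ L.map Alph.c := by
  intro hm
  obtain ⟨j, hj, hjeq⟩ := List.mem_map.mp hm
  have hj' : j = Fin.last n := c_inj hjeq
  subst hj'
  exact absurd (hL _ hj) (by simp)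

/-- The complete reduction of one track. -/
lemma track_reduces {x y : Fin (n+1) → List Bool} {cent hash : Alph n}
    {f : Fin (n+1) → List Bool}
    (hcrule : ∀ j : Fin (n+1), (j:ℕ) < n → ([cent, .c j], emb (f j) ++ [cent]) ∈ R1 n x y)
    (hend : ([cent, .c (Fin.last n)],
      hash :: (emb (f (Fin.last n)) ++ [Alph.dollar])) ∈ R1 n x y)
    (hhrule : ∀ s : Bool, ([E s, hash], [hash, E s]) ∈ R1 n x y)
    (x₀ : List Bool) (L : List (Fin (n+1))) (hL : ∀ j ∈ L, (j:ℕ) < n) :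
    Reduces (R1 n x y) (emb x₀ ++ [cent] ++ (L.map Alph.c ++ [Alph.c (Fin.last n)]))
      (hash :: (emb (x₀ ++ L.flatMap f ++ f (Fin.last n)) ++ [Alph.dollar])) := by
  refine Relation.ReflTransGen.trans
    (reduces_phaseA hcrule L hL x₀ [Alph.c (Fin.last n)]) ?_
  set z := x₀ ++ L.flatMap f with hz
  have hstep : Step (R1 n x y) (emb z ++ [cent] ++ [Alph.c (Fin.last n)])
      (emb z ++ (hash :: (emb (f (Fin.last n)) ++ [Alph.dollar])) ++ []) :=
    ⟨emb z, [], _, _, hend, by simp, rfl⟩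
  refine Relation.ReflTransGen.head hstep ?_
  have h3 := reduces_hash hhrule z (emb (f (Fin.last n)) ++ [Alph.dollar])
  have e1 : (emb z ++ (hash :: (emb (f (Fin.last n)) ++ [Alph.dollar])) ++ [] : List (Alph n)) =
      emb z ++ [hash] ++ (emb (f (Fin.last n)) ++ [Alph.dollar]) := by simp
  have e2 : ([hash] ++ emb z ++ (emb (f (Fin.last n)) ++ [Alph.dollar]) : List (Alph n)) =
      hash :: (emb (z ++ f (Fin.last n)) ++ [Alph.dollar]) := by simp [emb_append]
  rw [e1, ← e2, hz]
  simpa [hz, Reduces] using h3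

/-- Extracting the structure of the normal form from the invariant. -/
lemma extract {x y : Fin (n+1) → List Bool} {cent hash : Alph n}
    {f : Fin (n+1) → List Bool} {x₀ : List Bool} {w₁ w₂ : List (Alph n)}
    (hx₀ : x₀ ≠ []) (hhne : hash = .hash1 ∨ hash = .hash2)
    (hinv : Inv x y cent hash f x₀ w₁ (hash :: w₂)) :
    ∃ (L : List (Fin (n+1))) (r0 rest : List (Alph n)),
      (∀ j ∈ L, (j:ℕ) < n) ∧ w₁ = L.map Alph.c ++ Alph.c (Fin.last n) :: r0 ∧
      w₂ = emb (x₀ ++ L.flatMap f ++ f (Fin.last n)) ++ Alph.dollar :: rest := by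
  rcases hinv with ⟨L, r0, rest, hL, hw, hred, hu⟩ |
    ⟨L, r0, rest, p, q, hL, hw, hred, hpq, hu⟩
  · exfalso
    obtain ⟨b0, x₀', rfl⟩ := List.exists_cons_of_ne_nil hx₀
    rw [List.cons_append, emb_cons] at hu
    simp only [List.cons_append, List.append_assoc, List.cons.injEq] at hu
    rcases hhne with rfl | rfl <;> cases b0 <;> simp [E] at hu
  · cases p with
    | cons p0 p' =>
      exfalso
      rw [emb_cons] at hu
      simp only [List.cons_append, List.append_assoc, List.cons.injEq] at hu
      rcases hhne with rfl | rfl <;> cases p0 <;> simp [E] at hu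
    | nil =>
      simp only [List.nil_append] at hpq
      refine ⟨L, r0, rest, hL, hw, ?_⟩
      rw [hpq] at hu
      have : (emb ([] : List Bool) ++ [hash] ++
          emb (x₀ ++ L.flatMap f ++ f (Fin.last n)) ++ [Alph.dollar] ++ rest : List (Alph n)) =
          hash :: (emb (x₀ ++ L.flatMap f ++ f (Fin.last n)) ++ Alph.dollar :: rest) := by
        simp [emb]
      rw [this] at hu
      exact (List.cons.injEq .. ▸ hu : _ ∧ _).2 |>.symm ▸ rfl

end GP

open SRS in
/-- For fixed intermediate and end dominoes (all nonempty)
and every nonempty start domino `(x₀, y₀)`, the GPCP instance has a solution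
iff there exist `w₁, w₂` over `Σ̂` with `x₀·¢₁·w₁ →!_{R₁} #₁·w₂` and
`y₀·¢₂·w₁ →!_{R₁} #₂·w₂`. -/
theorem gpcp_iff_R1_reduction (n : ℕ) (x y : Fin (n + 1) → List Bool)
    (hx : ∀ j, x j ≠ []) (hy : ∀ j, y j ≠ [])
    (x₀ y₀ : List Bool) (hx₀ : x₀ ≠ []) (hy₀ : y₀ ≠ []) :
    GPCPSol n x₀ y₀ x y ↔
      ∃ w₁ w₂ : List (Alph n),
        SRS.NormalizesTo (R1 n x y) (emb x₀ ++ [Alph.cent1] ++ w₁)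
          ([Alph.hash1] ++ w₂) ∧
        SRS.NormalizesTo (R1 n x y) (emb y₀ ++ [Alph.cent2] ++ w₁)
          ([Alph.hash2] ++ w₂) := by
  constructor
  · rintro ⟨L, hL, hEq⟩
    refine ⟨L.map Alph.c ++ [Alph.c (Fin.last n)],
      emb (x₀ ++ L.flatMap x ++ x (Fin.last n)) ++ [Alph.dollar], ⟨?_, ?_⟩, ⟨?_, ?_⟩⟩
    · exact GP.track_reduces
        (fun j hj => (GP.mem_R1_iff x y _ _).mpr (Or.inl ⟨j, hj, Or.inl ⟨rfl, rfl⟩⟩))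
        ((GP.mem_R1_iff x y _ _).mpr (Or.inr (Or.inl ⟨rfl, rfl⟩)))
        (fun s => (GP.mem_R1_iff x y _ _).mpr (Or.inr (Or.inr (Or.inr
          ⟨GP.E s, by cases s <;> simp [GP.E], Or.inl ⟨rfl, rfl⟩⟩))))
        x₀ L hL
    · exact GP.irred (Or.inl rfl) _
    · have h := GP.track_reduces
        (fun j hj => (GP.mem_R1_iff x y _ _).mpr (Or.inl ⟨j, hj, Or.inr ⟨rfl, rfl⟩⟩))
        ((GP.mem_R1_iff x y _ _).mpr (Or.inr (Or.inr (Or.inl ⟨rfl, rfl⟩))))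
        (fun s => (GP.mem_R1_iff x y _ _).mpr (Or.inr (Or.inr (Or.inr
          ⟨GP.E s, by cases s <;> simp [GP.E], Or.inr ⟨rfl, rfl⟩⟩))))
        y₀ L hL
      rw [← hEq] at h
      exact h
    · exact GP.irred (Or.inr rfl) _
  · rintro ⟨w₁, w₂, ⟨hrx, -⟩, ⟨hry, -⟩⟩
    have inv0x : GP.Inv x y Alph.cent1 Alph.hash1 x x₀ w₁ (emb x₀ ++ [Alph.cent1] ++ w₁) :=
      Or.inl ⟨[], w₁, w₁, by simp, by simp, Relation.ReflTransGen.refl, by simp⟩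
    have inv0y : GP.Inv x y Alph.cent2 Alph.hash2 y y₀ w₁ (emb y₀ ++ [Alph.cent2] ++ w₁) :=
      Or.inl ⟨[], w₁, w₁, by simp, by simp, Relation.ReflTransGen.refl, by simp⟩
    have invx := GP.inv_reduces hx hy (GP.hcent1 x y) (GP.hhash1 x y)
      (Or.inl rfl) (Or.inl rfl) hrx inv0x
    have invy := GP.inv_reduces hx hy (GP.hcent2 x y) (GP.hhash2 x y)
      (Or.inr rfl) (Or.inr rfl) hry inv0y
    obtain ⟨Lx, r0x, restx, hLx, hw1x, hw2x⟩ :=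
      GP.extract hx₀ (Or.inl rfl) invx
    obtain ⟨Ly, r0y, resty, hLy, hw1y, hw2y⟩ :=
      GP.extract hy₀ (Or.inr rfl) invy
    have hmapeq : Lx.map Alph.c = Ly.map Alph.c :=
      (GP.split_unique (hw1x.symm.trans hw1y)
        (GP.clast_not_mem hLx) (GP.clast_not_mem hLy)).1
    have hLxy : Lx = Ly := List.map_injective_iff.mpr GP.c_inj hmapeq
    subst hLxy
    have hQ : (emb (x₀ ++ Lx.flatMap x ++ x (Fin.last n)) : List (Alph n)) =
        emb (y₀ ++ Lx.flatMap y ++ y (Fin.last n)) :=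
      (GP.split_unique (hw2x.symm.trans hw2y)
        (GP.dollar_not_mem_emb _) (GP.dollar_not_mem_emb _)).1
    exact ⟨Lx, hLx, GP.emb_inj hQ⟩
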